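/- Let b > 0 and q ≥ 1, and let Z be a real random variable with the generalized Gaussian distribution of scale b and shape q. Then for every natural number n, E[Z^n] ≤ b^n · n!. Equivalently, for every even natural number n and every q ≥ 1, Γ((n+1)/q) ≤ n! · Γ(1/q). -/

import Mathlib

open MeasureTheory Real

/-- The generalized Gaussian distribution with scale `b` and shape `q`:
density `z ↦ (q/(2bΓ(1/q))) · exp(−(|z|/b)^q)` w.r.t. Lebesgue measure. -/
noncomputable def genGaussian (b q : ℝ) : Measure ℝ :=
  volume.withDensity
    (fun z => ENNReal.ofReal ((q / (2 * b * Real.Gamma (1 / q))) * Real.exp (-((|z| / b) ^ q))))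

private lemma gammaIneq (q : ℝ) (hq : 1 ≤ q) (n : ℕ) :
    Real.Gamma (((n : ℝ) + 1) / q) ≤ (n.factorial : ℝ) * Real.Gamma (1 / q) := by
  have hq0 : 0 < q := lt_of_lt_of_le one_pos hq
  set s : ℝ := 1 / q with hs
  have hs0 : 0 < s := by positivity
  have hs1 : s ≤ 1 := by rw [hs]; exact (div_le_one hq0).mpr hq
  have hΓs : 0 < Real.Gamma s := Real.Gamma_pos_of_pos hs0
  have key : ∀ m : ℕ, Real.Gamma (s + m) ≤ (m.factorial : ℝ) * Real.Gamma s := by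
    intro m
    induction m with
    | zero => simp
    | succ k ih =>
      have h1 : s + ((k : ℝ) + 1) = (s + k) + 1 := by ring
      push_cast
      rw [h1, Real.Gamma_add_one (by positivity)]
      calc (s + k) * Real.Gamma (s + k) ≤ ((k : ℝ) + 1) * ((k.factorial : ℝ) * Real.Gamma s) := by
            apply mul_le_mul (by linarith) ih
              (Real.Gamma_nonneg_of_nonneg (by positivity)) (by positivity)
        _ = _ := by push_cast [Nat.factorial_succ]; ring
  have hΓsn : 0 < Real.Gamma (s + n) := Real.Gamma_pos_of_pos (by positivity)
  have hcombo : ((n : ℝ) + 1) / q = (1 - s) * s + s * (s + n) := by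
    rw [hs]; field_simp; ring
  have hconv := Real.convexOn_log_Gamma.2 (Set.mem_Ioi.mpr hs0)
    (Set.mem_Ioi.mpr (by positivity : (0:ℝ) < s + n)) (by linarith : (0:ℝ) ≤ 1 - s) hs0.le
    (by ring)
  simp only [Function.comp, smul_eq_mul] at hconv
  have h2 : Real.Gamma (((n : ℝ) + 1) / q) ≤ Real.Gamma s ^ (1 - s) * Real.Gamma (s + n) ^ s := by
    rw [hcombo]
    have hΓc : 0 < Real.Gamma ((1 - s) * s + s * (s + n)) :=
      Real.Gamma_pos_of_pos (by nlinarith)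
    calc Real.Gamma ((1 - s) * s + s * (s + n))
        = Real.exp (Real.log (Real.Gamma ((1 - s) * s + s * (s + n)))) := (Real.exp_log hΓc).symm
      _ ≤ Real.exp ((1 - s) * Real.log (Real.Gamma s) + s * Real.log (Real.Gamma (s + n))) :=
          Real.exp_le_exp.mpr hconv
      _ = Real.Gamma s ^ (1 - s) * Real.Gamma (s + n) ^ s := by
          rw [Real.exp_add, Real.rpow_def_of_pos hΓs, Real.rpow_def_of_pos hΓsn,
            mul_comm (1 - s), mul_comm s]
  have h3 : Real.Gamma (s + n) ^ s ≤ ((n.factorial : ℝ) * Real.Gamma s) ^ s :=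
    Real.rpow_le_rpow hΓsn.le (key n) hs0.le
  have hfac1 : (1 : ℝ) ≤ (n.factorial : ℝ) := by exact_mod_cast n.factorial_pos
  calc Real.Gamma (((n : ℝ) + 1) / q) ≤ Real.Gamma s ^ (1 - s) * Real.Gamma (s + n) ^ s := h2
    _ ≤ Real.Gamma s ^ (1 - s) * ((n.factorial : ℝ) * Real.Gamma s) ^ s := by
        apply mul_le_mul_of_nonneg_left h3 (Real.rpow_nonneg hΓs.le _)
    _ = (n.factorial : ℝ) ^ s * Real.Gamma s := by
        rw [Real.mul_rpow (by positivity) hΓs.le, ← mul_assoc,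
          mul_comm (Real.Gamma s ^ (1 - s)), mul_assoc, ← Real.rpow_add hΓs]
        norm_num
    _ ≤ (n.factorial : ℝ) * Real.Gamma s := by
        apply mul_le_mul_of_nonneg_right _ hΓs.le
        calc (n.factorial : ℝ) ^ s ≤ (n.factorial : ℝ) ^ (1:ℝ) :=
              Real.rpow_le_rpow_of_exponent_le hfac1 hs1
          _ = _ := Real.rpow_one _

/-- Moment bound for the generalized Gaussian distribution with `q ≥ 1`:
`E[Zⁿ] ≤ bⁿ·n!`; equivalently `Γ((n+1)/q) ≤ n!·Γ(1/q)` for even `n`. -/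
theorem genGaussian_moment_bound (b q : ℝ) (hb : 0 < b) (hq : 1 ≤ q) :
    (∀ n : ℕ, (∫ z, z ^ n ∂(genGaussian b q)) ≤ b ^ n * (n.factorial : ℝ)) ∧
      (∀ n : ℕ, Even n →
        Real.Gamma (((n : ℝ) + 1) / q) ≤ (n.factorial : ℝ) * Real.Gamma (1 / q)) := by
  have hq0 : 0 < q := lt_of_lt_of_le one_pos hq
  have hΓ : 0 < Real.Gamma (1 / q) := Real.Gamma_pos_of_pos (by positivity)
  refine ⟨fun n => ?_, fun n _ => gammaIneq q hq n⟩
  set c : ℝ := q / (2 * b * Real.Gamma (1 / q)) with hc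
  have hc0 : 0 < c := by positivity
  set g : ℝ → ℝ := fun z => c * Real.exp (-((|z| / b) ^ q)) with hg
  have hgpos : ∀ z, 0 < g z := fun z => by rw [hg]; positivity
  -- Step 1: reduce to a Lebesgue integral
  have step1 : (∫ z, z ^ n ∂(genGaussian b q)) = ∫ z, g z * z ^ n := by
    have hmeas : Measurable fun z : ℝ => (g z).toNNReal := by
      apply Measurable.real_toNNReal
      fun_prop
    have heq : genGaussian b q = volume.withDensity (fun z => ((g z).toNNReal : ENNReal)) := rfl
    rw [heq, integral_withDensity_eq_integral_smul hmeas]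
    congr 1
    ext z
    rw [NNReal.smul_def, Real.coe_toNNReal _ (hgpos z).le, smul_eq_mul]
  rw [step1]
  rcases Nat.even_or_odd n with hn | hn
  · -- even case: compute the integral exactly
    have habs : (fun z : ℝ => g z * z ^ n) = fun z => (fun t => g t * t ^ n) |z| := by
      funext z
      simp only [hg, abs_abs, hn.pow_abs]
    have hval : (∫ z, g z * z ^ n) = b ^ n / Real.Gamma (1 / q) * Real.Gamma (((n:ℝ) + 1) / q) := by
      rw [habs, integral_comp_abs (f := fun t => g t * t ^ n)]
      have hIoi : (∫ x in Set.Ioi (0:ℝ), g x * x ^ n)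
          = c * ∫ x in Set.Ioi (0:ℝ), x ^ (n:ℝ) * Real.exp (-(b ^ (-q)) * x ^ q) := by
        rw [← integral_const_mul]
        refine setIntegral_congr_fun measurableSet_Ioi (fun x hx => ?_)
        have hx0 : 0 < x := hx
        have habs' : |x| = x := abs_of_pos hx0
        have hpow : (x / b) ^ q = b ^ (-q) * x ^ q := by
          rw [div_eq_mul_inv, Real.mul_rpow hx0.le (by positivity),
            Real.rpow_neg hb.le, Real.inv_rpow hb.le]
          ring
        rw [hg]
        simp only [habs', hpow, Real.rpow_natCast]
        ring
      rw [hIoi, integral_rpow_mul_exp_neg_mul_rpow hq0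
        (lt_of_lt_of_le (by norm_num) (Nat.cast_nonneg n)) (by positivity)]
      have h4 : ((b:ℝ) ^ (-q)) ^ (-((n:ℝ) + 1) / q) = b ^ (n + 1) := by
        rw [← Real.rpow_natCast b (n + 1), ← Real.rpow_mul hb.le]
        congr 1
        push_cast
        field_simp
      rw [h4, hc, pow_succ]
      field_simp
    rw [hval]
    have := gammaIneq q hq n
    calc b ^ n / Real.Gamma (1 / q) * Real.Gamma (((n:ℝ) + 1) / q)
        ≤ b ^ n / Real.Gamma (1 / q) * ((n.factorial : ℝ) * Real.Gamma (1 / q)) := by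
          apply mul_le_mul_of_nonneg_left this (by positivity)
      _ = b ^ n * (n.factorial : ℝ) := by field_simp
  · -- odd case: the integral vanishes
    have hzero : (∫ z, g z * z ^ n) = 0 := by
      have hneg := integral_neg_eq_self (fun z => g z * z ^ n) (volume : Measure ℝ)
      have : (∫ z, g (-z) * (-z) ^ n) = - ∫ z, g z * z ^ n := by
        simp only [hg, abs_neg, hn.neg_pow]
        rw [← integral_neg]
        congr 1; funext z; ring
      rw [this] at hneg
      linarith
    rw [hzero]
    positivity
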